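/- If L_s is symmetric positive semidefinite with smallest eigenvalue of the restriction to the orthogonal complement of its kernel being positive, and D̂ = diag with d_i = 1 for i in a set S such that no nonzero vector in the kernel of L_s vanishes on all coordinates of S, then there exists c > 0 such that 2C L_s + 2c D̂ is positive definite. -/

import Mathlib

open Matrix

theorem stmt16 {N : ℕ} (Ls : Matrix (Fin N) (Fin N) ℝ)
    (hLsSym : Lsᵀ = Ls) (hLsPsd : Ls.PosSemidef)
    (hgap : ∃ μ > 0, ∀ v : Fin N → ℝ,
      (∀ w : Fin N → ℝ, Ls.mulVec w = 0 → v ⬝ᵥ w = 0) → μ * (v ⬝ᵥ v) ≤ v ⬝ᵥ Ls.mulVec v)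
    (S : Finset (Fin N))
    (hker : ∀ v : Fin N → ℝ, Ls.mulVec v = 0 → (∀ i ∈ S, v i = 0) → v = 0)
    (C : ℝ) (hC : 0 < C) :
    ∃ c > 0, ((2 * C) • Ls
      + (2 * c) • Matrix.diagonal (fun i => if i ∈ S then (1 : ℝ) else 0)).PosDef := by
  refine ⟨1, one_pos, ?_⟩
  set D : Matrix (Fin N) (Fin N) ℝ := Matrix.diagonal (fun i => if i ∈ S then (1 : ℝ) else 0)
  have hDherm : D.IsHermitian := isHermitian_diagonal _
  rw [posDef_iff_dotProduct_mulVec]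
  constructor
  · show _ = _
    simp [D, conjTranspose_add, conjTranspose_smul, hLsSym, diagonal_transpose]
    exact (Commute.ofNat_right _ 2).eq
  · intro x hx
    have hLq : 0 ≤ x ⬝ᵥ Ls.mulVec x := by
      simpa using hLsPsd.dotProduct_mulVec_nonneg x
    have hDq : x ⬝ᵥ D.mulVec x = ∑ i, (if i ∈ S then (1:ℝ) else 0) * (x i * x i) := by
      simp [D, dotProduct, mulVec_diagonal, mul_comm]
    have hDnn : 0 ≤ x ⬝ᵥ D.mulVec x := by
      rw [hDq]
      refine Finset.sum_nonneg fun i _ => ?_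
      split <;> nlinarith [mul_self_nonneg (x i)]
    have hsimp : star x ⬝ᵥ (((2 * C) • Ls + (2 * 1) • D) *ᵥ x)
        = (2 * C) * (x ⬝ᵥ Ls.mulVec x) + 2 * (x ⬝ᵥ D.mulVec x) := by
      simp only [add_mulVec, smul_mulVec, dotProduct_add, dotProduct_smul, smul_eq_mul,
        star_trivial]
      ring
    rw [hsimp]
    rcases lt_or_eq_of_le hLq with hpos | heq
    · have := mul_pos (by linarith : (0:ℝ) < 2 * C) hpos
      nlinarith
    · -- x ⬝ᵥ Ls x = 0, so Ls x = 0, and then D part must be positive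
      have hLs0 : Ls *ᵥ x = 0 := by
        have := (hLsPsd.dotProduct_mulVec_zero_iff x).mp (by simpa using heq.symm)
        simpa using this
      have hDpos : 0 < x ⬝ᵥ D.mulVec x := by
        rcases lt_or_eq_of_le hDnn with h | h
        · exact h
        · exfalso
          apply hx
          apply hker x hLs0
          intro i hi
          have : ∀ j ∈ Finset.univ, 0 ≤ (if j ∈ S then (1:ℝ) else 0) * (x j * x j) := by
            intro j _
            split <;> nlinarith [mul_self_nonneg (x j)]
          have hall := (Finset.sum_eq_zero_iff_of_nonneg this).mp (by rw [← hDq, ← h])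
          have := hall i (Finset.mem_univ i)
          rw [if_pos hi] at this
          nlinarith
      nlinarith
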